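/- The average participation solution AP satisfies symmetry: for every game u with u(∅) = 0 and all agents i, j, if u(S ∪ {i}) = u(S ∪ {j}) for every S ⊆ N \ {i, j}, then AP_i(u) = AP_j(u). -/

import Mathlib

open Finset
open scoped Classical

/-- A monotone game on agent set `Fin n`: `u ∅ = 0` and `u` is monotone w.r.t. inclusion. -/
def IsMonotoneGame (n : ℕ) (u : Finset (Fin n) → ℝ) : Prop :=
  u ∅ = 0 ∧ ∀ S T : Finset (Fin n), S ⊆ T → u S ≤ u T

/-- The contribution indicator: `c(u,i) = 0` if `u (S ∪ {i}) = u S` for every `S`,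
and `c(u,i) = 1` otherwise. -/
noncomputable def contrib {n : ℕ} (u : Finset (Fin n) → ℝ) (i : Fin n) : ℝ :=
  if ∀ S : Finset (Fin n), u (insert i S) = u S then 0 else 1

/-- The average participation solution
`AP_i(u) = ∑_{S ⊆ N \ {i}} w ⬝ (c(u,i) / (∑_{j ∈ S} c(u,j) + 1)) ⬝ u (S ∪ {i})`,
where `w = 1 / (2 ^ n - 1)`. -/
noncomputable def AP {n : ℕ} (u : Finset (Fin n) → ℝ) (i : Fin n) : ℝ :=
  ∑ S ∈ (Finset.univ.erase i).powerset,
    (1 / (2 ^ n - 1 : ℝ)) * (contrib u i / ((∑ j ∈ S, contrib u j) + 1)) * u (insert i S)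

lemma null_transfer {n : ℕ} (u : Finset (Fin n) → ℝ) (i j : Fin n)
    (h : ∀ S : Finset (Fin n), i ∉ S → j ∉ S → u (insert i S) = u (insert j S))
    (hi : ∀ S : Finset (Fin n), u (insert i S) = u S) :
    ∀ S : Finset (Fin n), u (insert j S) = u S := by
  intro S
  by_cases hjS : j ∈ S
  · rw [Finset.insert_eq_self.2 hjS]
  by_cases hiS : i ∈ S
  · obtain ⟨T, hiT, rfl⟩ : ∃ T, i ∉ T ∧ S = insert i T :=
      ⟨S.erase i, Finset.notMem_erase _ _, (Finset.insert_erase hiS).symm⟩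
    have hjT : j ∉ T := fun hj => hjS (Finset.mem_insert_of_mem hj)
    calc u (insert j (insert i T)) = u (insert i (insert j T)) := by rw [Finset.insert_comm]
      _ = u (insert j T) := hi _
      _ = u (insert i T) := (h T hiT hjT).symm
      _ = u (insert i T) := rfl
  · rw [← h S hiS hjS, hi S]

lemma u_image_swap {n : ℕ} (u : Finset (Fin n) → ℝ) (i j : Fin n)
    (h : ∀ S : Finset (Fin n), i ∉ S → j ∉ S → u (insert i S) = u (insert j S)) :
    ∀ A : Finset (Fin n), u (A.image (Equiv.swap i j)) = u A := by
  intro A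
  have key : ∀ T : Finset (Fin n), i ∉ T → j ∉ T → T.image (Equiv.swap i j) = T := by
    intro T hiT hjT
    have hfix : ∀ x ∈ T, Equiv.swap i j x = id x := fun x hx =>
      Equiv.swap_apply_of_ne_of_ne (fun e => hiT (e ▸ hx)) (fun e => hjT (e ▸ hx))
    rw [Finset.image_congr hfix, Finset.image_id]
  by_cases hiA : i ∈ A <;> by_cases hjA : j ∈ A
  · have hsub : A.image (Equiv.swap i j) ⊆ A := by
      intro x hx
      obtain ⟨y, hy, rfl⟩ := Finset.mem_image.1 hx
      rcases eq_or_ne y i with rfl | hyi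
      · rwa [Equiv.swap_apply_left]
      rcases eq_or_ne y j with rfl | hyj
      · rwa [Equiv.swap_apply_right]
      · rwa [Equiv.swap_apply_of_ne_of_ne hyi hyj]
    rw [Finset.eq_of_subset_of_card_le hsub
      (Finset.card_image_of_injective _ (Equiv.injective _)).ge]
  · obtain ⟨T, hiT, rfl⟩ : ∃ T, i ∉ T ∧ A = insert i T :=
      ⟨A.erase i, Finset.notMem_erase _ _, (Finset.insert_erase hiA).symm⟩
    have hjT : j ∉ T := fun hx => hjA (Finset.mem_insert_of_mem hx)
    rw [Finset.image_insert, Equiv.swap_apply_left, key T hiT hjT]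
    exact (h T hiT hjT).symm
  · obtain ⟨T, hjT, rfl⟩ : ∃ T, j ∉ T ∧ A = insert j T :=
      ⟨A.erase j, Finset.notMem_erase _ _, (Finset.insert_erase hjA).symm⟩
    have hiT : i ∉ T := fun hx => hiA (Finset.mem_insert_of_mem hx)
    rw [Finset.image_insert, Equiv.swap_apply_right, key T hiT hjT]
    exact h T hiT hjT
  · rw [key A hiA hjA]

theorem ap_symmetry (n : ℕ) (hn : 1 ≤ n)
    (u : Finset (Fin n) → ℝ) (hu : u ∅ = 0) (i j : Fin n)
    (h : ∀ S : Finset (Fin n), i ∉ S → j ∉ S → u (insert i S) = u (insert j S)) :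
    AP u i = AP u j := by
  rcases eq_or_ne i j with rfl | hij
  · rfl
  set σ := Equiv.swap i j with hσ
  have hsymm : ∀ S : Finset (Fin n), j ∉ S → i ∉ S → u (insert j S) = u (insert i S) :=
    fun S hj hi => (h S hi hj).symm
  have hcontrib : contrib u i = contrib u j := by
    unfold contrib
    by_cases hi : ∀ S : Finset (Fin n), u (insert i S) = u S
    · rw [if_pos hi, if_pos (null_transfer u i j h hi)]
    · rw [if_neg hi, if_neg fun hj' => hi (null_transfer u j i hsymm hj')]
  have hcσ : ∀ k, contrib u (σ k) = contrib u k := by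
    intro k
    rcases eq_or_ne k i with rfl | hki
    · rw [hσ, Equiv.swap_apply_left, hcontrib]
    rcases eq_or_ne k j with rfl | hkj
    · rw [hσ, Equiv.swap_apply_right, hcontrib]
    · rw [hσ, Equiv.swap_apply_of_ne_of_ne hki hkj]
  have himg : ∀ A : Finset (Fin n), u (A.image σ) = u A := u_image_swap u i j h
  unfold AP
  refine Finset.sum_bij' (fun S _ => S.image σ) (fun S _ => S.image σ) ?_ ?_ ?_ ?_ ?_
  · intro S hS
    rw [Finset.mem_powerset] at hS ⊢
    intro x hx
    obtain ⟨y, hy, rfl⟩ := Finset.mem_image.1 hx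
    have hyi : y ≠ i := fun e => (Finset.mem_erase.1 (hS (e ▸ hy))).1 rfl
    refine Finset.mem_erase.2 ⟨?_, Finset.mem_univ _⟩
    intro e
    have : y = i := by
      have := congrArg σ e
      rwa [hσ, Equiv.swap_apply_self, Equiv.swap_apply_right] at this
    exact hyi this
  · intro S hS
    rw [Finset.mem_powerset] at hS ⊢
    intro x hx
    obtain ⟨y, hy, rfl⟩ := Finset.mem_image.1 hx
    have hyj : y ≠ j := fun e => (Finset.mem_erase.1 (hS (e ▸ hy))).1 rfl
    refine Finset.mem_erase.2 ⟨?_, Finset.mem_univ _⟩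
    intro e
    have : y = j := by
      have := congrArg σ e
      rwa [hσ, Equiv.swap_apply_self, Equiv.swap_apply_left] at this
    exact hyj this
  · intro S _
    rw [Finset.image_image]
    have : (σ : Fin n → Fin n) ∘ σ = id := funext fun x => Equiv.swap_apply_self i j x
    rw [this, Finset.image_id]
  · intro S _
    rw [Finset.image_image]
    have : (σ : Fin n → Fin n) ∘ σ = id := funext fun x => Equiv.swap_apply_self i j x
    rw [this, Finset.image_id]
  · intro S hS
    have hsum : ∑ k ∈ S.image σ, contrib u k = ∑ k ∈ S, contrib u k := by
      rw [Finset.sum_image (fun a _ b _ hab => σ.injective hab)]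
      exact Finset.sum_congr rfl fun k _ => hcσ k
    have huval : u (insert j (S.image σ)) = u (insert i S) := by
      have : insert j (S.image σ) = (insert i S).image σ := by
        rw [Finset.image_insert, hσ, Equiv.swap_apply_left]
      rw [this, himg]
    rw [hsum, huval, hcontrib]
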